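/- Tilting Lemma: Let F, G be m-dimensional subspaces of ℝ^n with ‖Π_F − Π_G‖ ≤ χ for some χ ∈ [0,1), and let u : F → F⊥ be Lipschitz with u(0) = 0 and σ := χ(1 + Lip u) < 1. Then for every ρ > 0, the ball B_{(1−σ)ρ/√(1+(Lip u)²)}(0) ∩ G is contained in the orthogonal projection Π_G(graph u ∩ B_ρ(0)). -/

import Mathlib

open Metric Real Filter RealInnerProductSpace

noncomputable def pr {n : ℕ} (F : Submodule ℝ (EuclideanSpace ℝ (Fin n))) :
    EuclideanSpace ℝ (Fin n) →L[ℝ] EuclideanSpace ℝ (Fin n) :=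
  F.subtypeL.comp F.orthogonalProjectionOnto

noncomputable def graphSet {n : ℕ} (F : Submodule ℝ (EuclideanSpace ℝ (Fin n)))
    (u : F → Fᗮ) : Set (EuclideanSpace ℝ (Fin n)) :=
  Set.range fun z : F => (z : EuclideanSpace ℝ (Fin n)) + (u z : EuclideanSpace ℝ (Fin n))

noncomputable def cone {n : ℕ} (x : EuclideanSpace ℝ (Fin n)) (β : ℝ)
    (F : Submodule ℝ (EuclideanSpace ℝ (Fin n))) : Set (EuclideanSpace ℝ (Fin n)) :=
  {z | ‖pr Fᗮ (z - x)‖ ≤ β * ‖pr F (z - x)‖}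

set_option maxHeartbeats 1000000 in
/-- Tilting Lemma: if `∠(F,G) ≤ χ < 1`, `u : F → F⊥` is `L`-Lipschitz with
`u(0) = 0` and `σ := χ(1+L) < 1`, then for every `ρ > 0`,
`B_{(1-σ)ρ/√(1+L²)}(0) ∩ G ⊆ Π_G(graph u ∩ B_ρ(0))`. -/
theorem tilting_lemma {n m : ℕ}
    (F G : Submodule ℝ (EuclideanSpace ℝ (Fin n)))
    (hF : Module.finrank ℝ F = m) (hG : Module.finrank ℝ G = m)
    (χ L : ℝ) (hχ0 : 0 ≤ χ) (hχ1 : χ < 1) (hL : 0 ≤ L)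
    (hang : ‖pr F - pr G‖ ≤ χ)
    (u : F → Fᗮ) (hu0 : u 0 = 0)
    (hlip : ∀ a b : F, ‖u a - u b‖ ≤ L * ‖a - b‖)
    (hσ : χ * (1 + L) < 1) :
    ∀ ρ > (0 : ℝ),
      ball (0 : EuclideanSpace ℝ (Fin n)) ((1 - χ * (1 + L)) * ρ / Real.sqrt (1 + L ^ 2)) ∩
          (G : Set (EuclideanSpace ℝ (Fin n))) ⊆
        pr G '' (graphSet F u ∩ ball 0 ρ) := by
  intro ρ hρ y hy
  obtain ⟨hyb, hyG⟩ := hy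
  have hρ' : (0:ℝ) < ρ := hρ
  set σ := χ * (1 + L) with hσdef
  clear_value σ
  have hσ0 : 0 ≤ σ := by rw [hσdef]; exact mul_nonneg hχ0 (by linarith)
  have h1σ : 0 < 1 - σ := by linarith
  -- the contraction map
  set f : ↥F → ↥F := fun x =>
    F.orthogonalProjectionOnto y + x -
      F.orthogonalProjectionOnto (pr G ((x : EuclideanSpace ℝ (Fin n)) + (u x : EuclideanSpace ℝ (Fin n)))) with hf
  -- key Lipschitz estimate
  have hkey : ∀ x x' : F, ‖f x - f x'‖ ≤ σ * ‖x - x'‖ := by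
    intro x x'
    set v : EuclideanSpace ℝ (Fin n) := ((x - x' : F) : EuclideanSpace ℝ (Fin n)) + ((u x - u x' : Fᗮ) : EuclideanSpace ℝ (Fin n)) with hv
    have hsub : ((x : EuclideanSpace ℝ (Fin n)) + (u x : EuclideanSpace ℝ (Fin n))) - ((x' : EuclideanSpace ℝ (Fin n)) + (u x' : EuclideanSpace ℝ (Fin n))) = v := by
      simp [hv]; abel
    have hproj : F.orthogonalProjectionOnto v = x - x' := by
      rw [hv, map_add, Submodule.orthogonalProjectionOnto_mem_subspace_eq_self,
        Submodule.orthogonalProjectionOnto_apply_of_mem_orthogonal (u x - u x').2,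
        add_zero]
    have hAB : f x - f x' =
        F.orthogonalProjectionOnto ((pr F - pr G) v) := by
      have hprF : F.orthogonalProjectionOnto (pr F v) = F.orthogonalProjectionOnto v := by
        rw [pr, ContinuousLinearMap.comp_apply, Submodule.subtypeL_apply,
          Submodule.orthogonalProjectionOnto_mem_subspace_eq_self]
      have hPG : F.orthogonalProjectionOnto (pr G ((x : EuclideanSpace ℝ (Fin n)) + (u x : EuclideanSpace ℝ (Fin n)))) -
          F.orthogonalProjectionOnto (pr G ((x' : EuclideanSpace ℝ (Fin n)) + (u x' : EuclideanSpace ℝ (Fin n)))) =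
          F.orthogonalProjectionOnto (pr G v) := by
        rw [← map_sub, ← map_sub, hsub]
      simp only [hf, ContinuousLinearMap.sub_apply, map_sub, hprF, hproj]
      rw [← hPG]
      abel
    have h1 : ‖f x - f x'‖ ≤ ‖(pr F - pr G) v‖ := by
      rw [hAB]
      calc ‖F.orthogonalProjectionOnto ((pr F - pr G) v)‖
          ≤ ‖F.orthogonalProjectionOnto‖ * ‖(pr F - pr G) v‖ :=
            (F.orthogonalProjectionOnto).le_opNorm _
        _ ≤ 1 * ‖(pr F - pr G) v‖ := by
            gcongr; exact Submodule.orthogonalProjectionOnto_norm_le F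
        _ = ‖(pr F - pr G) v‖ := one_mul _
    have h2 : ‖(pr F - pr G) v‖ ≤ χ * ‖v‖ := by
      calc ‖(pr F - pr G) v‖ ≤ ‖pr F - pr G‖ * ‖v‖ := (pr F - pr G).le_opNorm v
        _ ≤ χ * ‖v‖ := by gcongr
    have h3 : ‖v‖ ≤ (1 + L) * ‖x - x'‖ := by
      have := hlip x x'
      calc ‖v‖ ≤ ‖((x - x' : F) : EuclideanSpace ℝ (Fin n))‖ + ‖((u x - u x' : Fᗮ) : EuclideanSpace ℝ (Fin n))‖ := norm_add_le _ _
        _ = ‖x - x'‖ + ‖u x - u x'‖ := by simp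
        _ ≤ ‖x - x'‖ + L * ‖x - x'‖ := by linarith
        _ = (1 + L) * ‖x - x'‖ := by ring
    calc ‖f x - f x'‖ ≤ χ * ‖v‖ := h1.trans h2
      _ ≤ χ * ((1 + L) * ‖x - x'‖) := by gcongr
      _ = σ * ‖x - x'‖ := by rw [hσdef]; ring
  -- contraction
  set K : NNReal := ⟨σ, hσ0⟩ with hK
  have hKσ : (K : ℝ) = σ := rfl
  have hc : ContractingWith K f := by
    constructor
    · exact_mod_cast (by rw [hKσ]; exact hσ : (K : ℝ) < 1)
    · apply LipschitzWith.of_dist_le_mul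
      intro x x'
      rw [dist_eq_norm, dist_eq_norm, hKσ]
      exact hkey x x'
  set x₀ : F := ContractingWith.fixedPoint f hc with hx₀def
  have hfix : f x₀ = x₀ := hc.fixedPoint_isFixedPt
  set z : EuclideanSpace ℝ (Fin n) := (x₀ : EuclideanSpace ℝ (Fin n)) + (u x₀ : EuclideanSpace ℝ (Fin n)) with hz
  -- projection equation
  have h1 : F.orthogonalProjectionOnto y - F.orthogonalProjectionOnto (pr G z) = 0 := by
    calc F.orthogonalProjectionOnto y - F.orthogonalProjectionOnto (pr G z)
        = (F.orthogonalProjectionOnto y + x₀ -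
            F.orthogonalProjectionOnto (pr G z)) - x₀ := by abel
      _ = 0 := by rw [show F.orthogonalProjectionOnto y + x₀ -
            F.orthogonalProjectionOnto (pr G z) = f x₀ from rfl, hfix, sub_self]
  set w : EuclideanSpace ℝ (Fin n) := pr G z - y with hw
  have hwG : w ∈ G := by
    refine Submodule.sub_mem G ?_ hyG
    exact (G.orthogonalProjectionOnto z).2
  have hprFw : pr F w = 0 := by
    have : F.orthogonalProjectionOnto w = 0 := by
      rw [hw, map_sub, ← neg_eq_zero, neg_sub, h1]
    simp [pr, this]
  have hprGw : pr G w = w := by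
    simp only [pr, ContinuousLinearMap.comp_apply, Submodule.subtypeL_apply]
    exact Submodule.starProjection_eq_self_iff.2 hwG
  have hw0 : w = 0 := by
    have h2 : ‖(pr F - pr G) w‖ ≤ χ * ‖w‖ :=
      ((pr F - pr G).le_opNorm w).trans (by gcongr)
    rw [ContinuousLinearMap.sub_apply, hprFw, hprGw, zero_sub, norm_neg] at h2
    have : ‖w‖ = 0 := by nlinarith [norm_nonneg w]
    exact norm_eq_zero.1 this
  have hprGz : pr G z = y := by
    have := hw0
    rw [hw, sub_eq_zero] at this
    exact this
  -- norm estimates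
  have hyn : ‖y‖ < (1 - σ) * ρ / Real.sqrt (1 + L ^ 2) := by
    simpa [dist_zero_right] using hyb
  have hf0 : f 0 = F.orthogonalProjectionOnto y := by
    simp [hf, hu0]
  have hx₀n : ‖x₀‖ ≤ ‖y‖ / (1 - σ) := by
    have hd := hc.dist_fixedPoint_le 0
    rw [hf0] at hd
    simp only [dist_zero_left, hKσ] at hd
    rw [hx₀def]
    have hle : ‖F.orthogonalProjectionOnto y‖ ≤ ‖y‖ := by
      calc ‖F.orthogonalProjectionOnto y‖ ≤ ‖F.orthogonalProjectionOnto‖ * ‖y‖ :=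
          (F.orthogonalProjectionOnto).le_opNorm _
        _ ≤ 1 * ‖y‖ := by gcongr; exact Submodule.orthogonalProjectionOnto_norm_le F
        _ = ‖y‖ := one_mul _
    calc ‖ContractingWith.fixedPoint f hc‖
        ≤ ‖F.orthogonalProjectionOnto y‖ / (1 - σ) := hd
      _ ≤ ‖y‖ / (1 - σ) := by gcongr
  clear hx₀def hK
  clear_value w z x₀
  have hsq : Real.sqrt (1 + L ^ 2) ^ 2 = 1 + L ^ 2 :=
    Real.sq_sqrt (by positivity)
  have hs1 : 1 ≤ Real.sqrt (1 + L ^ 2) := by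
    nlinarith [Real.sqrt_nonneg (1 + L ^ 2)]
  have hux : ‖(u x₀ : EuclideanSpace ℝ (Fin n))‖ ≤ L * ‖x₀‖ := by
    have := hlip x₀ 0
    rw [hu0, sub_zero, sub_zero] at this
    simpa using this
  have hzn : ‖z‖ ≤ Real.sqrt (1 + L ^ 2) * ‖x₀‖ := by
    have hinner : (inner ℝ ((x₀ : EuclideanSpace ℝ (Fin n))) ((u x₀ : EuclideanSpace ℝ (Fin n))) : ℝ) = 0 :=
      Submodule.inner_right_of_mem_orthogonal x₀.2 (u x₀).2
    have hpyth : ‖z‖ ^ 2 = ‖(x₀ : EuclideanSpace ℝ (Fin n))‖ ^ 2 + ‖(u x₀ : EuclideanSpace ℝ (Fin n))‖ ^ 2 := by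
      rw [hz, @norm_add_sq_real, hinner]; ring
    simp only [← Submodule.coe_norm] at hpyth
    have hux' : ‖u x₀‖ ≤ L * ‖x₀‖ := by simpa using hux
    have h4 : ‖z‖ ^ 2 ≤ (Real.sqrt (1 + L ^ 2) * ‖x₀‖) ^ 2 := by
      rw [mul_pow, hsq]
      nlinarith [norm_nonneg (u x₀), norm_nonneg x₀]
    exact (abs_le_of_sq_le_sq' h4
      (mul_nonneg (Real.sqrt_nonneg (1 + L ^ 2)) (norm_nonneg x₀))).2
  have hx₀ρ : ‖x₀‖ < ρ / Real.sqrt (1 + L ^ 2) := by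
    have : ‖y‖ / (1 - σ) < ρ / Real.sqrt (1 + L ^ 2) := by
      rw [div_lt_div_iff₀ h1σ (by linarith : (0:ℝ) < Real.sqrt (1 + L ^ 2))]
      calc ‖y‖ * Real.sqrt (1 + L ^ 2)
          < ((1 - σ) * ρ / Real.sqrt (1 + L ^ 2)) * Real.sqrt (1 + L ^ 2) :=
            mul_lt_mul_of_pos_right hyn (by linarith)
        _ = ρ * (1 - σ) := by field_simp
    exact hx₀n.trans_lt this
  have hzρ : ‖z‖ < ρ := by
    calc ‖z‖ ≤ Real.sqrt (1 + L ^ 2) * ‖x₀‖ := hzn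
      _ < Real.sqrt (1 + L ^ 2) * (ρ / Real.sqrt (1 + L ^ 2)) :=
          mul_lt_mul_of_pos_left hx₀ρ (by linarith)
      _ = ρ := by field_simp
  exact ⟨z, ⟨⟨x₀, hz.symm⟩, by simpa [dist_zero_right] using hzρ⟩, hprGz⟩
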